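/- arXiv:1403.3006 — 3 statements merged into one kernel-verified Lean document; each statement's English description precedes it below -/
import Mathlib

section
/- Let f and g be real-valued functions of two real variables that are defined, twice differentiable, and infinitely small of the second order in some neighborhood of the point (x₀, y₀), with all second-order partial derivatives at (x₀,y₀) nonzero. If the double limit lim_{(x,y)→(x₀,y₀)} f(x,y)/g(x,y) exists and equals a nonzero number k, then f''_xx(x₀,y₀)/g''_xx(x₀,y₀) = f''_xy(x₀,y₀)/g''_xy(x₀,y₀) = f''_yx(x₀,y₀)/g''_yx(x₀,y₀) = f''_yy(x₀,y₀)/g''_yy(x₀,y₀) = k. -/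
open Filter Topology

/-- Second-order Taylor limit along a line. -/
lemma taylor_line_limit (f : ℝ × ℝ → ℝ) (p : ℝ × ℝ)
    (hf : ∀ᶠ q in 𝓝 p, DifferentiableAt ℝ f q)
    (hf' : DifferentiableAt ℝ (fderiv ℝ f) p)
    (h0 : f p = 0) (hd : fderiv ℝ f p = 0) (v : ℝ × ℝ) :
    Tendsto (fun t : ℝ => f (p + t • v) / t ^ 2) (𝓝[≠] (0:ℝ))
      (𝓝 (fderiv ℝ (fderiv ℝ f) p v v / 2)) := by
  set c : ℝ → ℝ × ℝ := fun t => p + t • v with hc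
  have hcd : ∀ t : ℝ, HasDerivAt c v t := by
    intro t
    simpa [hc] using ((hasDerivAt_id t).smul_const v).const_add p
  have hccont : Continuous c := by fun_prop
  have hc0 : c 0 = p := by simp [hc]
  have hct : Tendsto c (𝓝 0) (𝓝 p) := by
    simpa [hc0] using hccont.tendsto 0
  -- derivative of φ = f ∘ c
  have hφ : ∀ᶠ t in 𝓝 (0:ℝ), HasDerivAt (fun t => f (c t)) (fderiv ℝ f (c t) v) t := by
    filter_upwards [hct.eventually hf] with t ht
    exact ht.hasFDerivAt.comp_hasDerivAt t (hcd t)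
  -- L t = fderiv f (c t) v has derivative Q v v at 0
  set Q := fderiv ℝ (fderiv ℝ f) p with hQ
  have hL : HasDerivAt (fun t => fderiv ℝ f (c t) v) (Q v v) 0 := by
    have h1 : HasDerivAt (fun t => fderiv ℝ f (c t)) (Q v) 0 := by
      have := (hc0 ▸ hf'.hasFDerivAt).comp_hasDerivAt 0 (hcd 0)
      simpa [hc0, Function.comp_def] using this
    have := (ContinuousLinearMap.apply ℝ ℝ v).hasFDerivAt.comp_hasDerivAt 0 h1
    simpa [Function.comp_def] using this
  have hL0 : fderiv ℝ f (c 0) v = 0 := by simp [hc0, hd]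
  have hslope : Tendsto (fun t : ℝ => fderiv ℝ f (c t) v / t) (𝓝[≠] 0) (𝓝 (Q v v)) := by
    have h := hasDerivAt_iff_tendsto_slope.1 hL
    have heq : slope (fun t => fderiv ℝ f (c t) v) 0 = fun t : ℝ => fderiv ℝ f (c t) v / t := by
      funext t
      simp [slope_def_field, hL0, div_eq_inv_mul]
    rw [heq] at h
    exact h
  have hdiv : Tendsto (fun t : ℝ => fderiv ℝ f (c t) v / (2 * t)) (𝓝[≠] 0) (𝓝 (Q v v / 2)) := by
    have := hslope.div_const 2
    simpa [div_div, mul_comm] using this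
  have hfa : Tendsto (fun t => f (c t)) (𝓝[≠] (0:ℝ)) (𝓝 0) := by
    have : Tendsto (fun t => f (c t)) (𝓝 (0:ℝ)) (𝓝 (f p)) :=
      ((hf.self_of_nhds).continuousAt.tendsto).comp hct
    rw [h0] at this
    exact this.mono_left nhdsWithin_le_nhds
  have hga : Tendsto (fun t : ℝ => t ^ 2) (𝓝[≠] (0:ℝ)) (𝓝 0) := by
    have : Tendsto (fun t : ℝ => t ^ 2) (𝓝 (0:ℝ)) (𝓝 0) := by
      simpa using (continuous_pow 2).tendsto (0:ℝ)
    exact this.mono_left nhdsWithin_le_nhds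
  exact HasDerivAt.lhopital_zero_nhdsNE
    (hφ.filter_mono nhdsWithin_le_nhds)
    (Eventually.of_forall fun t => by simpa [mul_comm] using hasDerivAt_pow 2 t)
    (by filter_upwards [self_mem_nhdsWithin] with t ht; exact mul_ne_zero two_ne_zero ht)
    hfa hga hdiv

/-- The value of the second derivative as a partial derivative expression. -/
lemma fderiv_fderiv_apply (f : ℝ × ℝ → ℝ) (p : ℝ × ℝ)
    (hf' : DifferentiableAt ℝ (fderiv ℝ f) p) (u w : ℝ × ℝ) :
    fderiv ℝ (fun q => fderiv ℝ f q u) p w = fderiv ℝ (fderiv ℝ f) p w u := by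
  have h := fderiv_clm_apply (c := fderiv ℝ f) (u := fun _ => u) hf'
    (differentiableAt_const u)
  rw [h]
  simp

/-- **Necessity direction of Theorem 2.** If the double limit of `f/g` at `(x₀,y₀)`
exists and equals a nonzero `k`, then all four ratios of corresponding second-order
partial derivatives of `f` and `g` at `(x₀,y₀)` equal `k`. -/
theorem secondOrder_lhopital_necessity (f g : ℝ × ℝ → ℝ) (x₀ y₀ : ℝ)
    (hf : ∀ᶠ q in 𝓝 (x₀, y₀), DifferentiableAt ℝ f q)
    (hg : ∀ᶠ q in 𝓝 (x₀, y₀), DifferentiableAt ℝ g q)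
    (hf' : ∀ᶠ q in 𝓝 (x₀, y₀), DifferentiableAt ℝ (fderiv ℝ f) q)
    (hg' : ∀ᶠ q in 𝓝 (x₀, y₀), DifferentiableAt ℝ (fderiv ℝ g) q)
    (hf0 : Tendsto f (𝓝[≠] (x₀, y₀)) (𝓝 0))
    (hg0 : Tendsto g (𝓝[≠] (x₀, y₀)) (𝓝 0))
    (hdf : fderiv ℝ f (x₀, y₀) = 0)
    (hdg : fderiv ℝ g (x₀, y₀) = 0)
    (hfxx : fderiv ℝ (fun q => fderiv ℝ f q (1, 0)) (x₀, y₀) (1, 0) ≠ 0)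
    (hfxy : fderiv ℝ (fun q => fderiv ℝ f q (1, 0)) (x₀, y₀) (0, 1) ≠ 0)
    (hfyx : fderiv ℝ (fun q => fderiv ℝ f q (0, 1)) (x₀, y₀) (1, 0) ≠ 0)
    (hfyy : fderiv ℝ (fun q => fderiv ℝ f q (0, 1)) (x₀, y₀) (0, 1) ≠ 0)
    (hgxx : fderiv ℝ (fun q => fderiv ℝ g q (1, 0)) (x₀, y₀) (1, 0) ≠ 0)
    (hgxy : fderiv ℝ (fun q => fderiv ℝ g q (1, 0)) (x₀, y₀) (0, 1) ≠ 0)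
    (hgyx : fderiv ℝ (fun q => fderiv ℝ g q (0, 1)) (x₀, y₀) (1, 0) ≠ 0)
    (hgyy : fderiv ℝ (fun q => fderiv ℝ g q (0, 1)) (x₀, y₀) (0, 1) ≠ 0)
    (k : ℝ) (hk : k ≠ 0)
    (hlim : Tendsto (fun q => f q / g q) (𝓝[≠] (x₀, y₀)) (𝓝 k)) :
    fderiv ℝ (fun q => fderiv ℝ f q (1, 0)) (x₀, y₀) (1, 0) /
      fderiv ℝ (fun q => fderiv ℝ g q (1, 0)) (x₀, y₀) (1, 0) = k ∧
    fderiv ℝ (fun q => fderiv ℝ f q (1, 0)) (x₀, y₀) (0, 1) /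
      fderiv ℝ (fun q => fderiv ℝ g q (1, 0)) (x₀, y₀) (0, 1) = k ∧
    fderiv ℝ (fun q => fderiv ℝ f q (0, 1)) (x₀, y₀) (1, 0) /
      fderiv ℝ (fun q => fderiv ℝ g q (0, 1)) (x₀, y₀) (1, 0) = k ∧
    fderiv ℝ (fun q => fderiv ℝ f q (0, 1)) (x₀, y₀) (0, 1) /
      fderiv ℝ (fun q => fderiv ℝ g q (0, 1)) (x₀, y₀) (0, 1) = k := by
  set p : ℝ × ℝ := (x₀, y₀) with hp
  set Qf := fderiv ℝ (fderiv ℝ f) p with hQf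
  set Qg := fderiv ℝ (fderiv ℝ g) p with hQg
  have hf'p : DifferentiableAt ℝ (fderiv ℝ f) p := hf'.self_of_nhds
  have hg'p : DifferentiableAt ℝ (fderiv ℝ g) p := hg'.self_of_nhds
  -- f p = 0, g p = 0
  have hfp : f p = 0 := by
    have h1 : Tendsto f (𝓝[≠] p) (𝓝 (f p)) :=
      ((hf.self_of_nhds).continuousAt.tendsto).mono_left nhdsWithin_le_nhds
    exact tendsto_nhds_unique h1 hf0
  have hgp : g p = 0 := by
    have h1 : Tendsto g (𝓝[≠] p) (𝓝 (g p)) :=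
      ((hg.self_of_nhds).continuousAt.tendsto).mono_left nhdsWithin_le_nhds
    exact tendsto_nhds_unique h1 hg0
  -- main directional identity
  have main : ∀ v : ℝ × ℝ, v ≠ 0 → Qg v v ≠ 0 → Qf v v = k * Qg v v := by
    intro v hv hgv
    have hF := taylor_line_limit f p hf hf'p hfp hdf v
    have hG := taylor_line_limit g p hg hg'p hgp hdg v
    have hGne : Qg v v / 2 ≠ 0 := div_ne_zero hgv two_ne_zero
    have hratio : Tendsto (fun t : ℝ => (f (p + t • v) / t ^ 2) / (g (p + t • v) / t ^ 2))
        (𝓝[≠] (0:ℝ)) (𝓝 ((Qf v v / 2) / (Qg v v / 2))) := hF.div hG hGne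
    have hline : Tendsto (fun t : ℝ => p + t • v) (𝓝[≠] (0:ℝ)) (𝓝[≠] p) := by
      rw [tendsto_nhdsWithin_iff]
      constructor
      · have hccont : Continuous (fun t : ℝ => p + t • v) := by fun_prop
        simpa using (hccont.tendsto 0).mono_left (nhdsWithin_le_nhds)
      · filter_upwards [self_mem_nhdsWithin] with t ht
        simp only [Set.mem_compl_iff, Set.mem_singleton_iff]
        intro h
        have : t • v = 0 := by
          have := congrArg (fun q => q - p) h
          simpa using this
        rcases smul_eq_zero.1 this with h1 | h1
        · exact ht h1
        · exact hv h1
    have hk' : Tendsto (fun t : ℝ => f (p + t • v) / g (p + t • v)) (𝓝[≠] (0:ℝ)) (𝓝 k) :=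
      hlim.comp hline
    have heq : ∀ᶠ t in 𝓝[≠] (0:ℝ),
        (f (p + t • v) / t ^ 2) / (g (p + t • v) / t ^ 2)
          = f (p + t • v) / g (p + t • v) := by
      filter_upwards [self_mem_nhdsWithin] with t ht
      rw [div_div_div_comm]
      rw [div_self (pow_ne_zero 2 ht), div_one]
    have : (Qf v v / 2) / (Qg v v / 2) = k :=
      tendsto_nhds_unique (hratio.congr' heq) hk'
    field_simp at this
    linarith
  -- entries
  have Ef : ∀ u w : ℝ × ℝ, fderiv ℝ (fun q => fderiv ℝ f q u) p w = Qf w u :=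
    fun u w => fderiv_fderiv_apply f p hf'p u w
  have Eg : ∀ u w : ℝ × ℝ, fderiv ℝ (fun q => fderiv ℝ g q u) p w = Qg w u :=
    fun u w => fderiv_fderiv_apply g p hg'p u w
  -- symmetry
  have symf : ∀ u w : ℝ × ℝ, Qf u w = Qf w u := by
    intro u w
    exact second_derivative_symmetric_of_eventually
      (by filter_upwards [hf] with q hq using hq.hasFDerivAt) hf'p.hasFDerivAt u w
  have symg : ∀ u w : ℝ × ℝ, Qg u w = Qg w u := by
    intro u w
    exact second_derivative_symmetric_of_eventually
      (by filter_upwards [hg] with q hq using hq.hasFDerivAt) hg'p.hasFDerivAt u w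
  set e1 : ℝ × ℝ := (1, 0) with he1
  set e2 : ℝ × ℝ := (0, 1) with he2
  -- expansion of quadratic forms along the line s ↦ e1 + s • e2
  have expandf : ∀ s : ℝ, Qf (e1 + s • e2) (e1 + s • e2)
      = Qf e1 e1 + s * Qf e1 e2 + s * Qf e2 e1 + s * s * Qf e2 e2 := by
    intro s
    simp only [map_add, map_smul, ContinuousLinearMap.add_apply,
      ContinuousLinearMap.smul_apply, smul_eq_mul]
    ring
  have expandg : ∀ s : ℝ, Qg (e1 + s • e2) (e1 + s • e2)
      = Qg e1 e1 + s * Qg e1 e2 + s * Qg e2 e1 + s * s * Qg e2 e2 := by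
    intro s
    simp only [map_add, map_smul, ContinuousLinearMap.add_apply,
      ContinuousLinearMap.smul_apply, smul_eq_mul]
    ring
  have hvne : ∀ s : ℝ, e1 + s • e2 ≠ 0 := by
    intro s h
    have := congrArg Prod.fst h
    simp [he1, he2] at this
  -- the polynomial with the g-quadratic values
  set P : Polynomial ℝ := Polynomial.C (Qg e1 e1) +
      Polynomial.C (Qg e1 e2 + Qg e2 e1) * Polynomial.X +
      Polynomial.C (Qg e2 e2) * Polynomial.X ^ 2 with hP
  have hPeval : ∀ s : ℝ, P.eval s = Qg (e1 + s • e2) (e1 + s • e2) := by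
    intro s
    rw [expandg]
    simp [hP]
    ring
  have hPne : P ≠ 0 := by
    intro h
    have : P.coeff 2 = 0 := by rw [h]; simp
    rw [hP] at this
    simp [Polynomial.coeff_add, Polynomial.coeff_C_mul, Polynomial.coeff_X_pow] at this
    exact hgyy (by rwa [Eg e2 e2, symg])
  have hZfin : Set.Finite {s : ℝ | P.IsRoot s} := Polynomial.finite_setOf_isRoot hPne
  -- the difference function vanishes identically
  have Hzero : ∀ s : ℝ, Qf (e1 + s • e2) (e1 + s • e2)
      - k * Qg (e1 + s • e2) (e1 + s • e2) = 0 := by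
    intro s₀
    set D : ℝ → ℝ := fun s => Qf (e1 + s • e2) (e1 + s • e2)
      - k * Qg (e1 + s • e2) (e1 + s • e2) with hD
    have hDcont : Continuous D := by
      have hw : Continuous (fun s : ℝ => e1 + s • e2) := by fun_prop
      have h1 : Continuous (fun v : ℝ × ℝ => Qf v v) :=
        Continuous.clm_apply Qf.continuous continuous_id
      have h2 : Continuous (fun v : ℝ × ℝ => Qg v v) :=
        Continuous.clm_apply Qg.continuous continuous_id
      exact (h1.comp hw).sub (continuous_const.mul (h2.comp hw))
    have hev : ∀ᶠ s in 𝓝[≠] s₀, D s = 0 := by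
      have hZ' : IsClosed ({s : ℝ | P.IsRoot s} \ {s₀}) :=
        (hZfin.subset Set.diff_subset).isClosed
      have hmem : ({s : ℝ | P.IsRoot s} \ {s₀})ᶜ ∈ 𝓝 s₀ :=
        hZ'.isOpen_compl.mem_nhds (by simp)
      filter_upwards [eventually_nhdsWithin_of_eventually_nhds
          (eventually_iff_exists_mem.2 ⟨_, hmem, fun s hs => hs⟩),
        self_mem_nhdsWithin] with s hs hne
      have hroot : ¬ P.IsRoot s := by
        intro hr
        exact hs ⟨hr, hne⟩
      have hgne : Qg (e1 + s • e2) (e1 + s • e2) ≠ 0 := by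
        rw [← hPeval]; exact hroot
      have := main (e1 + s • e2) (hvne s) hgne
      exact sub_eq_zero_of_eq this
    have hlim1 : Tendsto D (𝓝[≠] s₀) (𝓝 (D s₀)) :=
      (hDcont.tendsto s₀).mono_left nhdsWithin_le_nhds
    have hlim2 : Tendsto D (𝓝[≠] s₀) (𝓝 0) :=
      Tendsto.congr' (by filter_upwards [hev] with s hs using hs.symm) tendsto_const_nhds
    exact tendsto_nhds_unique hlim1 hlim2
  -- extract coefficients
  have H0 := Hzero 0
  have H1 := Hzero 1
  have Hm1 := Hzero (-1)
  rw [expandf, expandg] at H0 H1 Hm1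
  set a1 := Qf e1 e1 with ha1
  set b1 := Qf e1 e2 with hb1
  set b1' := Qf e2 e1 with hb1'
  set c1 := Qf e2 e2 with hc1
  set a2 := Qg e1 e1 with ha2
  set b2 := Qg e1 e2 with hb2
  set b2' := Qg e2 e1 with hb2'
  set c2 := Qg e2 e2 with hc2
  clear_value a1 b1 b1' c1 a2 b2 b2' c2
  ring_nf at H0 H1 Hm1
  have hA : a1 = k * a2 := by linear_combination H0
  have hC : c1 = k * c2 := by linear_combination (H1 + Hm1)/2 - H0
  have hBsum : b1 + b1' = k * (b2 + b2') := by linear_combination (H1 - Hm1)/2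
  have hsf : b1 = b1' := by rw [hb1, hb1', symf e1 e2]
  have hsg : b2 = b2' := by rw [hb2, hb2', symg e1 e2]
  have hB : b1' = k * b2' := by linear_combination hBsum/2 - hsf/2 + (k/2)*hsg
  have hB' : b1 = k * b2 := by rw [hsf, hsg]; exact hB
  refine ⟨?_, ?_, ?_, ?_⟩
  · rw [Ef e1 e1, Eg e1 e1, ← ha1, ← ha2, hA]
    have : a2 ≠ 0 := fun h => hgxx (by rw [Eg e1 e1, ← ha2, h])
    field_simp
  · rw [Ef e1 e2, Eg e1 e2, ← hb1', ← hb2', hB]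
    have : b2' ≠ 0 := fun h => hgxy (by rw [Eg e1 e2, ← hb2', h])
    field_simp
  · rw [Ef e2 e1, Eg e2 e1, ← hb1, ← hb2, hB']
    have : b2 ≠ 0 := fun h => hgyx (by rw [Eg e2 e1, ← hb2, h])
    field_simp
  · rw [Ef e2 e2, Eg e2 e2, ← hc1, ← hc2, hC]
    have : c2 ≠ 0 := fun h => hgyy (by rw [Eg e2 e2, ← hc2, h])
    field_simp
end

section
/- Let f and g be real-valued functions of two real variables, defined and differentiable in a neighborhood of (x₀,y₀), with f(x₀,y₀) = g(x₀,y₀) = 0, and suppose f'_x(x₀,y₀) = 0 while f'_y(x₀,y₀), g'_x(x₀,y₀), g'_y(x₀,y₀) are all nonzero. Then the double limit lim_{(x,y)→(x₀,y₀)} f(x,y)/g(x,y) does not exist; in particular, along the line x = x₀ the limit of f/g equals f'_y(x₀,y₀)/g'_y(x₀,y₀) ≠ 0, while along every path with Δy = o(Δx) the limit of f/g equals 0. -/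
open Filter Topology Asymptotics

/-- **Case (1) after Theorem 1.** If `f(x₀,y₀) = g(x₀,y₀) = 0`, `f'_x(x₀,y₀) = 0` and
`f'_y, g'_x, g'_y` are nonzero at `(x₀,y₀)`, then the double limit of `f/g` at
`(x₀,y₀)` does not exist; along the line `x = x₀` the limit equals
`f'_y(x₀,y₀)/g'_y(x₀,y₀) ≠ 0`, while along every path `Δy = o(Δx)` the limit is `0`. -/
theorem one_partial_vanishes_no_limit (f g : ℝ × ℝ → ℝ) (x₀ y₀ : ℝ)
    (hf : ∀ᶠ q in 𝓝 (x₀, y₀), DifferentiableAt ℝ f q)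
    (hg : ∀ᶠ q in 𝓝 (x₀, y₀), DifferentiableAt ℝ g q)
    (hf0 : f (x₀, y₀) = 0) (hg0 : g (x₀, y₀) = 0)
    (hfx : fderiv ℝ f (x₀, y₀) (1, 0) = 0)
    (hfy : fderiv ℝ f (x₀, y₀) (0, 1) ≠ 0)
    (hgx : fderiv ℝ g (x₀, y₀) (1, 0) ≠ 0)
    (hgy : fderiv ℝ g (x₀, y₀) (0, 1) ≠ 0) :
    (¬ ∃ L : ℝ, Tendsto (fun q => f q / g q) (𝓝[≠] (x₀, y₀)) (𝓝 L)) ∧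
    Tendsto (fun y => f (x₀, y) / g (x₀, y)) (𝓝[≠] y₀)
      (𝓝 (fderiv ℝ f (x₀, y₀) (0, 1) / fderiv ℝ g (x₀, y₀) (0, 1))) ∧
    fderiv ℝ f (x₀, y₀) (0, 1) / fderiv ℝ g (x₀, y₀) (0, 1) ≠ 0 ∧
    (∀ γ : ℝ → ℝ, γ =o[𝓝 (0 : ℝ)] (fun t => t) →
      Tendsto (fun t => f (x₀ + t, y₀ + γ t) / g (x₀ + t, y₀ + γ t))
        (𝓝[≠] (0 : ℝ)) (𝓝 0)) := by
  have hfd : DifferentiableAt ℝ f (x₀, y₀) := hf.self_of_nhds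
  have hgd : DifferentiableAt ℝ g (x₀, y₀) := hg.self_of_nhds
  have htne : ∀ᶠ t in 𝓝[≠] (0 : ℝ), t ≠ 0 := by
    filter_upwards [eventually_mem_nhdsWithin] with t ht
    simpa using ht
  -- the limit along the line x = x₀
  have hFd : HasDerivAt (fun y => f (x₀, y)) (fderiv ℝ f (x₀, y₀) (0, 1)) y₀ := by
    have h1 : HasDerivAt (fun y : ℝ => ((x₀ : ℝ), y)) ((0 : ℝ), (1 : ℝ)) y₀ :=
      HasDerivAt.prodMk (hasDerivAt_const y₀ x₀) (hasDerivAt_id y₀)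
    exact hfd.hasFDerivAt.comp_hasDerivAt y₀ h1
  have hGd : HasDerivAt (fun y => g (x₀, y)) (fderiv ℝ g (x₀, y₀) (0, 1)) y₀ := by
    have h1 : HasDerivAt (fun y : ℝ => ((x₀ : ℝ), y)) ((0 : ℝ), (1 : ℝ)) y₀ :=
      HasDerivAt.prodMk (hasDerivAt_const y₀ x₀) (hasDerivAt_id y₀)
    exact hgd.hasFDerivAt.comp_hasDerivAt y₀ h1
  have hFslope : Tendsto (fun y => f (x₀, y) / (y - y₀)) (𝓝[≠] y₀)
      (𝓝 (fderiv ℝ f (x₀, y₀) (0, 1))) := by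
    have := hasDerivAt_iff_tendsto_slope.mp hFd
    refine this.congr' ?_
    filter_upwards with y
    simp [slope_def_field, hf0, div_eq_div_iff]
  have hGslope : Tendsto (fun y => g (x₀, y) / (y - y₀)) (𝓝[≠] y₀)
      (𝓝 (fderiv ℝ g (x₀, y₀) (0, 1))) := by
    have := hasDerivAt_iff_tendsto_slope.mp hGd
    refine this.congr' ?_
    filter_upwards with y
    simp [slope_def_field, hg0, div_eq_div_iff]
  have part2 : Tendsto (fun y => f (x₀, y) / g (x₀, y)) (𝓝[≠] y₀)
      (𝓝 (fderiv ℝ f (x₀, y₀) (0, 1) / fderiv ℝ g (x₀, y₀) (0, 1))) := by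
    refine (hFslope.div hGslope hgy).congr' ?_
    filter_upwards [eventually_mem_nhdsWithin] with y hy
    have hy' : y - y₀ ≠ 0 := sub_ne_zero.mpr (by simpa using hy)
    exact div_div_div_cancel_right₀ hy' _ _
  have hne : fderiv ℝ f (x₀, y₀) (0, 1) / fderiv ℝ g (x₀, y₀) (0, 1) ≠ 0 :=
    div_ne_zero hfy hgy
  -- the limit along paths Δy = o(Δx)
  have key : ∀ γ : ℝ → ℝ, γ =o[𝓝 (0 : ℝ)] (fun t => t) →
      Tendsto (fun t => f (x₀ + t, y₀ + γ t) / g (x₀ + t, y₀ + γ t))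
        (𝓝[≠] (0 : ℝ)) (𝓝 0) := by
    intro γ hγ
    set v : ℝ → ℝ × ℝ := fun t => (t, γ t) with hv
    have hγ0 : Tendsto γ (𝓝 0) (𝓝 0) := hγ.isBigO.trans_tendsto tendsto_id
    have hv0 : Tendsto v (𝓝 (0 : ℝ)) (𝓝 ((0 : ℝ × ℝ))) := by
      have := tendsto_id.prodMk_nhds hγ0
      simpa [hv, Prod.mk_zero_zero] using this
    have hvO : v =O[𝓝 (0 : ℝ)] (fun t => t) := by
      refine IsBigO.of_bound 1 ?_
      filter_upwards [hγ.def one_pos] with t ht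
      simp only [hv, Prod.norm_def, Real.norm_eq_abs, one_mul]
      simp only [one_mul, Real.norm_eq_abs] at ht
      exact max_le le_rfl ht
    have hfo : (fun w : ℝ × ℝ => f ((x₀, y₀) + w) - fderiv ℝ f (x₀, y₀) w)
        =o[𝓝 (0 : ℝ × ℝ)] (fun w => w) := by
      have := hasFDerivAt_iff_isLittleO_nhds_zero.mp hfd.hasFDerivAt
      simpa [hf0] using this
    have hgo : (fun w : ℝ × ℝ => g ((x₀, y₀) + w) - fderiv ℝ g (x₀, y₀) w)
        =o[𝓝 (0 : ℝ × ℝ)] (fun w => w) := by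
      have := hasFDerivAt_iff_isLittleO_nhds_zero.mp hgd.hasFDerivAt
      simpa [hg0] using this
    have hvdecomp : ∀ t, v t = t • ((1 : ℝ), (0 : ℝ)) + γ t • ((0 : ℝ), (1 : ℝ)) := by
      intro t; simp [hv, Prod.ext_iff]
    have hDf : ∀ t, fderiv ℝ f (x₀, y₀) (v t) = γ t * fderiv ℝ f (x₀, y₀) (0, 1) := by
      intro t
      rw [hvdecomp t, map_add, map_smul, map_smul, hfx, smul_eq_mul, smul_eq_mul]
      ring
    have hDg : ∀ t, fderiv ℝ g (x₀, y₀) (v t)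
        = t * fderiv ℝ g (x₀, y₀) (1, 0) + γ t * fderiv ℝ g (x₀, y₀) (0, 1) := by
      intro t
      rw [hvdecomp t, map_add, map_smul, map_smul, smul_eq_mul, smul_eq_mul]
    have hfo' : (fun t => f ((x₀, y₀) + v t) - fderiv ℝ f (x₀, y₀) (v t))
        =o[𝓝 (0 : ℝ)] (fun t => t) :=
      ((hfo.comp_tendsto hv0).trans_isBigO hvO)
    have hgo' : (fun t => g ((x₀, y₀) + v t) - fderiv ℝ g (x₀, y₀) (v t))
        =o[𝓝 (0 : ℝ)] (fun t => t) :=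
      ((hgo.comp_tendsto hv0).trans_isBigO hvO)
    have hγf : (fun t => γ t * fderiv ℝ f (x₀, y₀) (0, 1)) =o[𝓝 (0 : ℝ)] (fun t => t) := by
      simpa [mul_comm] using hγ.const_mul_left (fderiv ℝ f (x₀, y₀) (0, 1))
    have hγg : (fun t => γ t * fderiv ℝ g (x₀, y₀) (0, 1)) =o[𝓝 (0 : ℝ)] (fun t => t) := by
      simpa [mul_comm] using hγ.const_mul_left (fderiv ℝ g (x₀, y₀) (0, 1))
    have hfall : (fun t => f ((x₀, y₀) + v t)) =o[𝓝 (0 : ℝ)] (fun t => t) := by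
      have := hfo'.add hγf
      refine this.congr_left fun t => ?_
      rw [hDf t]; ring
    have hgall : (fun t => g ((x₀, y₀) + v t) - t * fderiv ℝ g (x₀, y₀) (1, 0))
        =o[𝓝 (0 : ℝ)] (fun t => t) := by
      have := hgo'.add hγg
      refine this.congr_left fun t => ?_
      rw [hDg t]; ring
    have hfT : Tendsto (fun t => f ((x₀, y₀) + v t) / t) (𝓝[≠] (0 : ℝ)) (𝓝 0) :=
      hfall.tendsto_div_nhds_zero.mono_left nhdsWithin_le_nhds
    have hgT : Tendsto (fun t => g ((x₀, y₀) + v t) / t) (𝓝[≠] (0 : ℝ))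
        (𝓝 (fderiv ℝ g (x₀, y₀) (1, 0))) := by
      have h0 : Tendsto (fun t => (g ((x₀, y₀) + v t) - t * fderiv ℝ g (x₀, y₀) (1, 0)) / t)
          (𝓝[≠] (0 : ℝ)) (𝓝 0) :=
        hgall.tendsto_div_nhds_zero.mono_left nhdsWithin_le_nhds
      have := h0.add (tendsto_const_nhds (x := fderiv ℝ g (x₀, y₀) (1, 0)))
      rw [zero_add] at this
      refine this.congr' ?_
      filter_upwards [htne] with t ht
      field_simp
      ring
    have hratio : Tendsto (fun t => (f ((x₀, y₀) + v t) / t) / (g ((x₀, y₀) + v t) / t))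
        (𝓝[≠] (0 : ℝ)) (𝓝 0) := by
      have := hfT.div hgT hgx
      rw [zero_div] at this
      exact this
    refine hratio.congr' ?_
    filter_upwards [htne] with t ht
    rw [div_div_div_cancel_right₀ ht]
    simp [hv, Prod.mk_add_mk]
  -- the double limit does not exist
  have part1 : ¬ ∃ L : ℝ, Tendsto (fun q => f q / g q) (𝓝[≠] (x₀, y₀)) (𝓝 L) := by
    rintro ⟨L, hL⟩
    -- path along the x-axis gives L = 0
    have hzero : (fun _ : ℝ => (0 : ℝ)) =o[𝓝 (0 : ℝ)] (fun t => t) :=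
      isLittleO_zero _ _
    have hA := key (fun _ => 0) hzero
    have hmA : Tendsto (fun t : ℝ => (x₀ + t, y₀ + (0 : ℝ))) (𝓝[≠] (0 : ℝ))
        (𝓝[≠] (x₀, y₀)) := by
      rw [tendsto_nhdsWithin_iff]
      constructor
      · have : Continuous (fun t : ℝ => (x₀ + t, y₀ + (0 : ℝ))) := by continuity
        have h := this.tendsto 0
        simpa using h.mono_left nhdsWithin_le_nhds
      · filter_upwards [htne] with t ht
        simp [Prod.ext_iff]
        intro h
        exact absurd (by linarith) ht
    have hA' : Tendsto (fun t : ℝ => f (x₀ + t, y₀ + (0 : ℝ)) / g (x₀ + t, y₀ + (0 : ℝ)))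
        (𝓝[≠] (0 : ℝ)) (𝓝 L) := hL.comp hmA
    have hL0 : L = 0 := tendsto_nhds_unique hA' hA
    -- path along the line x = x₀ gives L = f'_y / g'_y ≠ 0
    have hmB : Tendsto (fun y : ℝ => ((x₀ : ℝ), y)) (𝓝[≠] y₀) (𝓝[≠] (x₀, y₀)) := by
      rw [tendsto_nhdsWithin_iff]
      constructor
      · have : Continuous (fun y : ℝ => ((x₀ : ℝ), y)) := by continuity
        exact (this.tendsto y₀).mono_left nhdsWithin_le_nhds
      · filter_upwards [eventually_mem_nhdsWithin] with y hy
        simp only [Set.mem_compl_iff, Set.mem_singleton_iff] at hy ⊢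
        simp [Prod.ext_iff]
        intro h
        exact hy h
    have hB' : Tendsto (fun y : ℝ => f (x₀, y) / g (x₀, y)) (𝓝[≠] y₀) (𝓝 L) := hL.comp hmB
    have : L = fderiv ℝ f (x₀, y₀) (0, 1) / fderiv ℝ g (x₀, y₀) (0, 1) :=
      tendsto_nhds_unique hB' part2
    rw [hL0] at this
    exact hne this.symm
  exact ⟨part1, part2, hne, key⟩
end

section
/- Let f and g be real-valued functions of two real variables, defined and differentiable in a neighborhood of (x₀,y₀), with f(x₀,y₀) = g(x₀,y₀) = 0, and suppose f'_x(x₀,y₀) = g'_x(x₀,y₀) = 0 while f'_y(x₀,y₀) and g'_y(x₀,y₀) are nonzero. Then along every line through (x₀,y₀) of the form x − x₀ = r(y − y₀) (r real), the limit of f(x,y)/g(x,y) as (x,y) → (x₀,y₀) along that line equals f'_y(x₀,y₀)/g'_y(x₀,y₀). -/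
open Filter Topology

lemma aux_slope (f : ℝ × ℝ → ℝ) (x₀ y₀ r : ℝ)
    (hf : DifferentiableAt ℝ f (x₀, y₀))
    (hf0 : f (x₀, y₀) = 0)
    (hfx : fderiv ℝ f (x₀, y₀) (1, 0) = 0) :
    Tendsto (fun t : ℝ => f (x₀ + r * t, y₀ + t) / t) (𝓝[≠] (0 : ℝ))
      (𝓝 (fderiv ℝ f (x₀, y₀) (0, 1))) := by
  have hγ : HasDerivAt (fun t : ℝ => ((x₀ + r * t, y₀ + t) : ℝ × ℝ)) (r, 1) 0 := by
    simpa using HasDerivAt.prodMk ((hasDerivAt_const 0 x₀).add ((hasDerivAt_id 0).const_mul r))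
      ((hasDerivAt_const 0 y₀).add (hasDerivAt_id 0))
  have hγ0 : ((x₀ + r * 0, y₀ + 0) : ℝ × ℝ) = (x₀, y₀) := by simp
  have hcomp : HasDerivAt (fun t : ℝ => f (x₀ + r * t, y₀ + t))
      (fderiv ℝ f (x₀, y₀) (r, 1)) 0 := by
    have hf' : HasFDerivAt f (fderiv ℝ f (x₀, y₀)) (x₀ + r * 0, y₀ + 0) := by
      rw [hγ0]; exact hf.hasFDerivAt
    exact hf'.comp_hasDerivAt 0 hγ
  have hval : fderiv ℝ f (x₀, y₀) (r, 1) = fderiv ℝ f (x₀, y₀) (0, 1) := by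
    have : ((r, 1) : ℝ × ℝ) = r • (1, 0) + (0, 1) := by
      simp [Prod.ext_iff]
    rw [this, map_add, map_smul, hfx]
    simp
  rw [hval] at hcomp
  have := hasDerivAt_iff_tendsto_slope.mp hcomp
  refine this.congr' ?_
  filter_upwards [self_mem_nhdsWithin] with t ht
  simp [slope, hf0, div_eq_inv_mul]

/-- **Case (2) after Theorem 1.** If `f(x₀,y₀) = g(x₀,y₀) = 0`,
`f'_x(x₀,y₀) = g'_x(x₀,y₀) = 0` and `f'_y(x₀,y₀), g'_y(x₀,y₀)` are nonzero, then
along every line `x - x₀ = r (y - y₀)` through `(x₀,y₀)` the limit of `f/g` equals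
`f'_y(x₀,y₀)/g'_y(x₀,y₀)`. -/
theorem both_x_partials_vanish_limit_along_lines (f g : ℝ × ℝ → ℝ) (x₀ y₀ : ℝ)
    (hf : ∀ᶠ q in 𝓝 (x₀, y₀), DifferentiableAt ℝ f q)
    (hg : ∀ᶠ q in 𝓝 (x₀, y₀), DifferentiableAt ℝ g q)
    (hf0 : f (x₀, y₀) = 0) (hg0 : g (x₀, y₀) = 0)
    (hfx : fderiv ℝ f (x₀, y₀) (1, 0) = 0)
    (hgx : fderiv ℝ g (x₀, y₀) (1, 0) = 0)
    (hfy : fderiv ℝ f (x₀, y₀) (0, 1) ≠ 0)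
    (hgy : fderiv ℝ g (x₀, y₀) (0, 1) ≠ 0) :
    ∀ r : ℝ,
      Tendsto (fun t : ℝ => f (x₀ + r * t, y₀ + t) / g (x₀ + r * t, y₀ + t))
        (𝓝[≠] (0 : ℝ))
        (𝓝 (fderiv ℝ f (x₀, y₀) (0, 1) / fderiv ℝ g (x₀, y₀) (0, 1))) := by
  intro r
  have hF := aux_slope f x₀ y₀ r hf.self_of_nhds hf0 hfx
  have hG := aux_slope g x₀ y₀ r hg.self_of_nhds hg0 hgx
  have h := hF.div hG hgy
  refine h.congr' ?_
  filter_upwards [self_mem_nhdsWithin] with t ht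
  simp only [Pi.div_apply]
  rw [div_div_div_cancel_right₀]
  exact sub_ne_zero.mp (by simpa using ht)
end
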